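/- A finite group of odd order all of whose Sylow subgroups are cyclic is metacyclic, i.e., it is an extension of a cyclic group by a cyclic group. -/

import Mathlib

open Subgroup

/-- The automorphism group of a cyclic group is commutative. -/
private theorem mulAut_comm_of_cyclic {Q : Type*} [Group Q] [IsCyclic Q] (σ τ : MulAut Q) :
    σ * τ = τ * σ := by
  obtain ⟨g, hg⟩ := IsCyclic.exists_generator (α := Q)
  obtain ⟨a, ha⟩ := Subgroup.mem_zpowers_iff.mp (hg (σ g))
  obtain ⟨b, hb⟩ := Subgroup.mem_zpowers_iff.mp (hg (τ g))
  have hσ : ∀ m : ℤ, σ (g ^ m) = g ^ (a * m) := fun m => by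
    rw [map_zpow, ← ha, ← zpow_mul, mul_comm]
  have hτ : ∀ m : ℤ, τ (g ^ m) = g ^ (b * m) := fun m => by
    rw [map_zpow, ← hb, ← zpow_mul, mul_comm]
  ext x
  obtain ⟨k, rfl⟩ := Subgroup.mem_zpowers_iff.mp (hg x)
  rw [MulAut.mul_apply, MulAut.mul_apply, hτ k, hσ, hσ k, hτ]
  congr 1
  ring

/-- A finite commutative Z-group is cyclic. -/
private theorem isCyclic_of_comm_of_zgroup (H : Type) [Group H] [Finite H] [IsZGroup H]
    (hcomm : ∀ a b : H, a * b = b * a) : IsCyclic H := by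
  letI : CommGroup H := { ‹Group H› with mul_comm := hcomm }
  apply IsCyclic.of_exponent_eq_card
  refine Nat.dvd_antisymm Group.exponent_dvd_nat_card ?_
  rw [Nat.dvd_iff_prime_pow_dvd_dvd]
  intro p k hp hpk
  haveI := Fact.mk hp
  obtain ⟨P⟩ := (inferInstance : Nonempty (Sylow p H))
  have hcyc : IsCyclic P := IsZGroup.isZGroup p hp P
  obtain ⟨g, hg⟩ := hcyc.exists_generator
  have horder : orderOf g = Nat.card P := orderOf_eq_card_of_forall_mem_zpowers hg
  have h2 : orderOf ((g : (P : Subgroup H)) : H) = Nat.card P := by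
    rw [← horder]
    exact orderOf_injective (P : Subgroup H).subtype (P : Subgroup H).subtype_injective g
  have h3 : p ^ k ∣ Nat.card P := by
    rw [P.card_eq_multiplicity]
    exact pow_dvd_pow p
      ((Nat.Prime.pow_dvd_iff_le_factorization hp Nat.card_pos.ne').mp hpk)
  calc p ^ k ∣ Nat.card P := h3
    _ = orderOf ((g : (P : Subgroup H)) : H) := h2.symm
    _ ∣ Monoid.exponent H := Monoid.order_dvd_exponent _

/-- For the smallest prime `p` dividing the order of a Z-group, the normalizer of a Sylow
`p`-subgroup is contained in its centralizer. -/
private theorem norm_le_cent (G : Type) [Group G] [Finite G] [IsZGroup G]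
    {p : ℕ} [hpf : Fact p.Prime] (hp : p = (Nat.card G).minFac) (P : Sylow p G) :
    Subgroup.normalizer ((P : Subgroup G) : Set G) ≤ Subgroup.centralizer (P : Set G) := by
  set N := Subgroup.normalizer ((P : Subgroup G) : Set G) with hN
  set f := (P : Subgroup G).normalizerMonoidHom with hf
  haveI : IsCyclic (P : Subgroup G) := IsZGroup.isZGroup p hpf.out P
  have hcard : Nat.card N = Nat.card f.range * Nat.card f.ker := by
    rw [Subgroup.card_eq_card_quotient_mul_card_subgroup f.ker,
      Nat.card_congr (QuotientGroup.quotientKerEquivRange f).toEquiv]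
  have hpk : Nat.card (P : Subgroup G) = p ^ (Nat.card G).factorization p :=
    P.card_eq_multiplicity
  have hp1 : p ∣ Nat.card G := hp ▸ Nat.minFac_dvd _
  have hk1 : 1 ≤ (Nat.card G).factorization p :=
    (Nat.Prime.pow_dvd_iff_le_factorization hpf.out Nat.card_pos.ne').mp (by simpa using hp1)
  have hd1 : Nat.card f.range ∣ Nat.card (MulAut (P : Subgroup G)) :=
    Subgroup.card_subgroup_dvd_card _
  rw [IsCyclic.card_mulAut, hpk, Nat.totient_prime_pow hpf.out hk1] at hd1
  -- `P` is commutative, so `P ≤ C(P)`, hence `p ^ k` divides the kernel's cardinality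
  haveI : IsMulCommutative (P : Subgroup G) := by
    letI := IsCyclic.commGroup (α := (P : Subgroup G))
    exact ⟨⟨mul_comm⟩⟩
  have hPker : ((P : Subgroup G).subgroupOf N) ≤ f.ker := by
    rw [hf, Subgroup.normalizerMonoidHom_ker]
    exact Subgroup.comap_mono (Subgroup.le_centralizer _)
  have hker_card : p ^ (Nat.card G).factorization p ∣ Nat.card f.ker := by
    have hEq : Nat.card ((P : Subgroup G).subgroupOf N) = Nat.card (P : Subgroup G) :=
      Nat.card_congr (Subgroup.subgroupOfEquivOfLe Subgroup.le_normalizer).toEquiv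
    calc p ^ (Nat.card G).factorization p = Nat.card (P : Subgroup G) := hpk.symm
      _ = Nat.card ((P : Subgroup G).subgroupOf N) := hEq.symm
      _ ∣ Nat.card f.ker := Subgroup.card_dvd_of_le hPker
  have hNdvd : Nat.card N ∣ Nat.card G := Subgroup.card_subgroup_dvd_card N
  have hpd : ¬ p ∣ Nat.card f.range := by
    intro hdvd
    have hcontra : p ^ ((Nat.card G).factorization p + 1) ∣ Nat.card G := by
      calc p ^ ((Nat.card G).factorization p + 1)
          = p ^ (Nat.card G).factorization p * p := by rw [pow_succ]
        _ ∣ Nat.card f.ker * Nat.card f.range := mul_dvd_mul hker_card hdvd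
        _ = Nat.card N := by rw [hcard, mul_comm]
        _ ∣ Nat.card G := hNdvd
    exact Nat.pow_succ_factorization_not_dvd Nat.card_pos.ne' hpf.out hcontra
  -- the cardinality of the range divides p - 1
  have hcop : Nat.Coprime (Nat.card f.range) (p ^ ((Nat.card G).factorization p - 1)) :=
    Nat.Coprime.pow_right _ (((Nat.Prime.coprime_iff_not_dvd hpf.out).mpr hpd).symm)
  have hd2 : Nat.card f.range ∣ p - 1 := by
    refine hcop.dvd_of_dvd_mul_right ?_
    rwa [mul_comm] at hd1
  have hd3 : Nat.card f.range ∣ Nat.card G :=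
    dvd_trans (Dvd.intro_left (Nat.card f.ker) (by rw [hcard, mul_comm])) hNdvd
  have hd : Nat.card f.range = 1 := by
    by_contra h
    have hr := Nat.minFac_prime h
    have h1 : (Nat.card f.range).minFac ∣ Nat.card G := (Nat.minFac_dvd _).trans hd3
    have h2 : (Nat.card G).minFac ≤ (Nat.card f.range).minFac :=
      Nat.minFac_le_of_dvd hr.two_le h1
    have h3 : (Nat.card f.range).minFac ∣ p - 1 := (Nat.minFac_dvd _).trans hd2
    have h4 : (Nat.card f.range).minFac ≤ p - 1 :=
      Nat.le_of_dvd (by have := hpf.out.two_le; omega) h3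
    have := hpf.out.two_le
    omega
  have hker : f.ker = ⊤ := by
    apply Subgroup.eq_top_of_card_eq
    rw [hcard, hd, one_mul]
  rw [hf, Subgroup.normalizerMonoidHom_ker] at hker
  exact Subgroup.subgroupOf_eq_top.mp hker

/-- A characteristic subgroup of a normal subgroup is normal. -/
private theorem map_subtype_normal {G : Type} [Group G] {K : Subgroup G} [K.Normal]
    (H : Subgroup K) [hchar : H.Characteristic] : (H.map K.subtype).Normal := by
  constructor
  intro n hn g
  obtain ⟨x, hx, rfl⟩ := hn
  refine ⟨(MulAut.conjNormal g : MulAut K) x, ?_, ?_⟩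
  · have hmap := Subgroup.characteristic_iff_map_eq.mp hchar (MulAut.conjNormal g)
    rw [← hmap]
    exact Subgroup.mem_map_of_mem _ hx
  · simpa using MulAut.conjNormal_apply g x

/-- The commutator subgroup centralizes every cyclic normal subgroup. -/
private theorem commutator_le_centralizer_of_cyclic {G : Type} [Group G] (Q : Subgroup G)
    [Q.Normal] [IsCyclic Q] : commutator G ≤ Subgroup.centralizer (Q : Set G) := by
  letI : CommGroup (MulAut Q) :=
    { (inferInstance : Group (MulAut Q)) with mul_comm := mulAut_comm_of_cyclic }
  refine (Abelianization.commutator_subset_ker (MulAut.conjNormal : G →* MulAut Q)).trans ?_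
  intro x hx
  rw [MonoidHom.mem_ker] at hx
  rw [Subgroup.mem_centralizer_iff]
  intro g hg
  have h1 : ((MulAut.conjNormal x : MulAut Q) ⟨g, hg⟩ : G) = g := by rw [hx]; rfl
  rw [MulAut.conjNormal_apply] at h1
  -- h1 : x * g * x⁻¹ = g
  have h2 := congrArg (· * x) h1
  simpa [mul_assoc] using h2.symm

/-- In a finite Z-group, the Sylow subgroup corresponding to the largest prime divisor
of the order is normal. -/
private theorem sylow_normal_of_max : ∀ (n : ℕ) (G : Type) [Group G] [Finite G] [IsZGroup G],
    Nat.card G = n → ∀ q : ℕ, q.Prime → q ∣ Nat.card G →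
    (∀ r : ℕ, r.Prime → r ∣ Nat.card G → r ≤ q) → ∀ Q : Sylow q G, (Q : Subgroup G).Normal := by
  intro n
  induction n using Nat.strong_induction_on with
  | _ n ih =>
    intro G _ _ _ hn q hq hqd hqmax Q
    haveI := Fact.mk hq
    have hG1 : Nat.card G ≠ 1 := by
      intro h
      rw [h, Nat.dvd_one] at hqd
      exact hq.one_lt.ne' hqd
    obtain ⟨p, hp⟩ : ∃ p, p = (Nat.card G).minFac := ⟨_, rfl⟩
    haveI hpfact := Fact.mk (hp ▸ Nat.minFac_prime hG1)
    obtain ⟨P⟩ := (inferInstance : Nonempty (Sylow p G))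
    have hP := norm_le_cent G hp P
    have hcompl := MonoidHom.ker_transferSylow_isComplement' P hP
    have hpK : ¬ p ∣ Nat.card (MonoidHom.transferSylow P hP).ker :=
      MonoidHom.not_dvd_card_ker_transferSylow P hP
    have hmul : Nat.card (MonoidHom.transferSylow P hP).ker * Nat.card (P : Subgroup G)
        = Nat.card G := hcompl.card_mul
    have hPcard : Nat.card (P : Subgroup G) = p ^ (Nat.card G).factorization p :=
      P.card_eq_multiplicity
    have hpdvd : p ∣ Nat.card G := hp ▸ Nat.minFac_dvd _
    have hPgt : 1 < Nat.card (P : Subgroup G) := by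
      have h1 : p ∣ Nat.card (P : Subgroup G) := P.dvd_card_of_dvd_card hpdvd
      have h2 : p ≤ Nat.card (P : Subgroup G) := Nat.le_of_dvd Nat.card_pos h1
      have := hpfact.out.two_le
      omega
    have hKdvdG : Nat.card (MonoidHom.transferSylow P hP).ker ∣ Nat.card G :=
      ⟨Nat.card (P : Subgroup G), hmul.symm⟩
    by_cases hK1 : Nat.card (MonoidHom.transferSylow P hP).ker = 1
    · -- G is a p-group; the Sylow p-subgroup is everything
      have hqp : q = p := by
        have hcardG : Nat.card G = Nat.card (P : Subgroup G) := by
          rw [← hmul, hK1, one_mul]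
        have hdq : q ∣ p ^ (Nat.card G).factorization p := by
          rw [← hPcard, ← hcardG]; exact hqd
        exact (Nat.prime_dvd_prime_iff_eq hq hpfact.out).mp (hq.dvd_of_dvd_pow hdq)
      subst hqp
      have htop : (P : Subgroup G) = ⊤ := by
        apply Subgroup.eq_top_of_card_eq
        rw [← hmul, hK1, one_mul]
      have hPnormal : (P : Subgroup G).Normal := by rw [htop]; infer_instance
      haveI := Sylow.unique_of_normal P hPnormal
      have hQP : Q = P := Subsingleton.elim Q P
      rw [hQP]
      exact hPnormal
    · -- pass to the normal p-complement K
      have hqp : q ≠ p := by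
        intro h
        have hr := Nat.minFac_prime hK1
        have hrdvdK := Nat.minFac_dvd (Nat.card (MonoidHom.transferSylow P hP).ker)
        have hrG : (Nat.card (MonoidHom.transferSylow P hP).ker).minFac ∣ Nat.card G :=
          hrdvdK.trans hKdvdG
        have h1 : (Nat.card (MonoidHom.transferSylow P hP).ker).minFac ≤ q := hqmax _ hr hrG
        have h2 : (Nat.card G).minFac ≤ (Nat.card (MonoidHom.transferSylow P hP).ker).minFac :=
          Nat.minFac_le_of_dvd hr.two_le hrG
        have h3 : (Nat.card (MonoidHom.transferSylow P hP).ker).minFac = p := by omega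
        rw [h3] at hrdvdK
        exact hpK hrdvdK
      have hqK : q ∣ Nat.card (MonoidHom.transferSylow P hP).ker := by
        have hdq : q ∣ Nat.card (MonoidHom.transferSylow P hP).ker * Nat.card (P : Subgroup G) :=
          hmul ▸ hqd
        rcases (Nat.Prime.dvd_mul hq).mp hdq with h | h
        · exact h
        · exfalso
          rw [hPcard] at h
          exact hqp ((Nat.prime_dvd_prime_iff_eq hq hpfact.out).mp (hq.dvd_of_dvd_pow h))
      have hKlt : Nat.card (MonoidHom.transferSylow P hP).ker < Nat.card G := by
        have h0 : 0 < Nat.card (MonoidHom.transferSylow P hP).ker := Nat.card_pos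
        have h1 := (Nat.lt_mul_iff_one_lt_right h0).mpr hPgt
        omega
      have hIH := ih (Nat.card (MonoidHom.transferSylow P hP).ker) (hn ▸ hKlt)
        (MonoidHom.transferSylow P hP).ker rfl q hq hqK
        (fun r hr hrd => hqmax r hr (hrd.trans hKdvdG))
      obtain ⟨Q'⟩ := (inferInstance : Nonempty (Sylow q (MonoidHom.transferSylow P hP).ker))
      have hQ'norm : (Q' : Subgroup (MonoidHom.transferSylow P hP).ker).Normal := hIH Q'
      haveI hchar : (Q' : Subgroup (MonoidHom.transferSylow P hP).ker).Characteristic :=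
        Sylow.characteristic_of_normal Q' hQ'norm
      haveI hmapnorm :
          ((Q' : Subgroup (MonoidHom.transferSylow P hP).ker).map
            (MonoidHom.transferSylow P hP).ker.subtype).Normal :=
        map_subtype_normal _
      have hcardQ' : Nat.card ((Q' : Subgroup (MonoidHom.transferSylow P hP).ker).map
          (MonoidHom.transferSylow P hP).ker.subtype) = q ^ (Nat.card G).factorization q := by
        rw [Nat.card_congr (Subgroup.equivMapOfInjective _ _
          (MonoidHom.transferSylow P hP).ker.subtype_injective).symm.toEquiv,
          Q'.card_eq_multiplicity]
        congr 1
        have h0 : Nat.card (MonoidHom.transferSylow P hP).ker ≠ 0 := Nat.card_pos.ne'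
        have h0' : Nat.card (P : Subgroup G) ≠ 0 := Nat.card_pos.ne'
        rw [← hmul, Nat.factorization_mul h0 h0', Finsupp.add_apply, hPcard,
          hpfact.out.factorization_pow, Finsupp.single_apply, if_neg (by exact hqp ∘ Eq.symm)]
        omega
      let S : Sylow q G := Sylow.ofCard _ hcardQ'
      have hSnorm : (S : Subgroup G).Normal := hmapnorm
      haveI := Sylow.unique_of_normal S hSnorm
      have hQS : Q = S := Subsingleton.elim Q S
      rw [hQS]
      exact hSnorm

/-- The commutator subgroup of a finite Z-group is cyclic. -/
private theorem commutator_cyclic : ∀ (n : ℕ) (G : Type) [Group G] [Finite G] [IsZGroup G],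
    Nat.card G = n → IsCyclic (commutator G) := by
  intro n
  induction n using Nat.strong_induction_on with
  | _ n ih =>
    intro G _ _ _ hn
    by_cases hG1 : Nat.card G = 1
    · haveI : Subsingleton G := (Nat.card_eq_one_iff_unique.mp hG1).1
      haveI : Subsingleton (commutator G) := ⟨fun a b => Subtype.ext (Subsingleton.elim _ _)⟩
      exact isCyclic_of_subsingleton
    · have hm0 : Nat.card G ≠ 0 := Nat.card_pos.ne'
      have hne : (Nat.card G).primeFactors.Nonempty := by
        rw [Nat.nonempty_primeFactors]
        omega
      set q := (Nat.card G).primeFactors.max' hne with hqdef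
      have hqmem := Finset.max'_mem _ hne
      have hq : q.Prime := Nat.prime_of_mem_primeFactors hqmem
      have hqd : q ∣ Nat.card G := Nat.dvd_of_mem_primeFactors hqmem
      have hqmax : ∀ r, r.Prime → r ∣ Nat.card G → r ≤ q := fun r hr hrd =>
        Finset.le_max' _ r (Nat.mem_primeFactors.mpr ⟨hr, hrd, hm0⟩)
      haveI := Fact.mk hq
      obtain ⟨Q⟩ := (inferInstance : Nonempty (Sylow q G))
      haveI hQn : (Q : Subgroup G).Normal := sylow_normal_of_max _ G rfl q hq hqd hqmax Q
      haveI hQcyc : IsCyclic (Q : Subgroup G) := IsZGroup.isZGroup q hq Q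
      have hQcard : 1 < Nat.card (Q : Subgroup G) := by
        have h1 : q ∣ Nat.card (Q : Subgroup G) := Q.dvd_card_of_dvd_card hqd
        have h2 : q ≤ Nat.card (Q : Subgroup G) := Nat.le_of_dvd Nat.card_pos h1
        have := hq.two_le
        omega
      have hlt : Nat.card (G ⧸ (Q : Subgroup G)) < Nat.card G := by
        have heq := Subgroup.card_eq_card_quotient_mul_card_subgroup (Q : Subgroup G)
        have h0 : 0 < Nat.card (G ⧸ (Q : Subgroup G)) := Nat.card_pos
        have h1 := (Nat.lt_mul_iff_one_lt_right h0).mpr hQcard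
        omega
      have hIH : IsCyclic (commutator (G ⧸ (Q : Subgroup G))) :=
        ih _ (hn ▸ hlt) _ rfl
      have hmap : Subgroup.map (QuotientGroup.mk' (Q : Subgroup G)) (commutator G)
          = commutator (G ⧸ (Q : Subgroup G)) := by
        rw [_root_.commutator_def, _root_.commutator_def, Subgroup.map_commutator,
          Subgroup.map_top_of_surjective _ (QuotientGroup.mk'_surjective _)]
      set C := commutator G with hC
      set f := (QuotientGroup.mk' (Q : Subgroup G)).domRestrict C with hfdef
      haveI : IsCyclic f.range := by
        rw [hfdef, MonoidHom.domRestrict_range, hmap]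
        exact hIH
      have hcent : C ≤ Subgroup.centralizer ((Q : Subgroup G) : Set G) :=
        commutator_le_centralizer_of_cyclic _
      have hker : f.rangeRestrict.ker ≤ Subgroup.center C := by
        rw [MonoidHom.ker_rangeRestrict, hfdef, MonoidHom.ker_domRestrict]
        intro x hx
        rw [Subgroup.mem_subgroupOf, QuotientGroup.ker_mk'] at hx
        rw [Subgroup.mem_center_iff]
        intro y
        have hyC : (y : G) ∈ Subgroup.centralizer ((Q : Subgroup G) : Set G) := hcent y.2
        have h1 := Subgroup.mem_centralizer_iff.mp hyC (x : G) hx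
        exact Subtype.ext h1.symm
      have hcomm : ∀ a b : C, a * b = b * a :=
        commutative_of_cyclic_center_quotient f.rangeRestrict hker
      exact isCyclic_of_comm_of_zgroup C hcomm

/-- A finite group of odd order all of whose Sylow subgroups are cyclic is metacyclic:
it has a cyclic normal subgroup with cyclic quotient. -/
theorem odd_order_cyclic_sylow_metacyclic (G : Type) [Group G] [Finite G]
    (hodd : Odd (Nat.card G))
    (hsyl : ∀ (p : ℕ) (_ : Fact p.Prime) (P : Sylow p G), IsCyclic P) :
    ∃ (N : Subgroup G) (hN : N.Normal), IsCyclic N ∧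
      (letI := hN; IsCyclic (G ⧸ N)) := by
  haveI : IsZGroup G := ⟨fun p hp P => hsyl p ⟨hp⟩ P⟩
  refine ⟨commutator G, inferInstance, commutator_cyclic _ G rfl, ?_⟩
  exact isCyclic_of_comm_of_zgroup (G ⧸ commutator G)
    (fun a b => mul_comm (G := Abelianization G) a b)
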